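/- Let (S1, S2) be an S-pair on a finite set S with |S| = n ≥ 3. If there exist sets A1 ∈ S1 and A2 ∈ S2 with |A1| = |A2| = n-1, A1 ≠ A2, and sets B1, B2 ⊆ S with |B1| = |B2| = n-2, such that for i = 1,2: Bi ∩ Ai = B1 ∩ B2, B1 ∩ B2 is an (n-3)-subset of A1 ∩ A2, and every singleton subset of Bi lies in Si, then (S1, S2) is order consistent: for every ordering s1 s2 ... sn of S, there exists i ∈ [n] with {s1,...,si} ∈ S1 or {si,...,sn} ∈ S2. -/

import Mathlib

variable {α : Type*} [DecidableEq α]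

/-- Property (S1) of an `S`-pair, for one family. -/
def PropS1 (𝒮 : Set (Finset α)) : Prop :=
  ∀ A ∈ 𝒮, ∀ B ∈ 𝒮, A.card = B.card + 1 → B ⊂ A →
    ∀ C ⊆ A, C.card = B.card → C ∈ 𝒮

/-- Property (S2) of an `S`-pair, for one family. -/
def PropS2 (𝒮 : Set (Finset α)) : Prop :=
  ∀ A ∈ 𝒮, ∀ B ∈ 𝒮, A.card = B.card → (A ∩ B).card = A.card - 1 → A ∪ B ∈ 𝒮

/-- `(𝒮₁, 𝒮₂)` is an `S`-pair: both families consist of subsets of `S` and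
satisfy (S1)–(S4). -/
def IsSPair (S : Finset α) (𝒮₁ 𝒮₂ : Set (Finset α)) : Prop :=
  (∀ A ∈ 𝒮₁, A ⊆ S) ∧ (∀ A ∈ 𝒮₂, A ⊆ S) ∧
  PropS1 𝒮₁ ∧ PropS1 𝒮₂ ∧ PropS2 𝒮₁ ∧ PropS2 𝒮₂ ∧
  (¬ ∀ x ∈ S, {x} ∈ 𝒮₁) ∧ (¬ ∀ x ∈ S, {x} ∈ 𝒮₂) ∧ S ∉ 𝒮₁ ∧ S ∉ 𝒮₂ ∧
  (∀ k, 1 ≤ k → k ≤ S.card - 1 → ∀ x ∈ S,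
    ¬ ((∀ C ⊆ S.erase x, C.card = k → C ∈ 𝒮₁) ∧
       (∀ C ⊆ S.erase x, C.card = S.card - k → C ∈ 𝒮₂)))

/-- `(𝒮₁, 𝒮₂)` is order consistent with respect to `S`: for every ordering
`s₁ s₂ ⋯ sₙ` of `S` there is `i` with `{s₁, …, sᵢ} ∈ 𝒮₁` or `{sᵢ, …, sₙ} ∈ 𝒮₂`. -/
def OrderConsistent (S : Finset α) (𝒮₁ 𝒮₂ : Set (Finset α)) : Prop :=
  ∀ e : Fin S.card → α, Function.Injective e → Finset.univ.image e = S →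
    ∃ i : Fin S.card,
      (Finset.Iic i).image e ∈ 𝒮₁ ∨ (Finset.Ici i).image e ∈ 𝒮₂

/-- The witness configuration in Theorem 4.1: `(A₁, A₂) ∈ 𝒮₁ × 𝒮₂` of size `n-1`,
`A₁ ≠ A₂`, and `B₁, B₂ ⊆ S` of size `n-2` with `Bᵢ ∩ Aᵢ = B₁ ∩ B₂` an `(n-3)`-subset
of `A₁ ∩ A₂` and every singleton of `Bᵢ` in `𝒮ᵢ`. -/
def SPairWitness (S : Finset α) (𝒮₁ 𝒮₂ : Set (Finset α)) : Prop :=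
  ∃ A₁ ∈ 𝒮₁, ∃ A₂ ∈ 𝒮₂, ∃ B₁ B₂ : Finset α,
    A₁.card = S.card - 1 ∧ A₂.card = S.card - 1 ∧ A₁ ≠ A₂ ∧
    B₁ ⊆ S ∧ B₂ ⊆ S ∧ B₁.card = S.card - 2 ∧ B₂.card = S.card - 2 ∧
    B₁ ∩ A₁ = B₁ ∩ B₂ ∧ B₂ ∩ A₂ = B₁ ∩ B₂ ∧
    B₁ ∩ B₂ ⊆ A₁ ∩ A₂ ∧ (B₁ ∩ B₂).card = S.card - 3 ∧
    (∀ x ∈ B₁, {x} ∈ 𝒮₁) ∧ (∀ x ∈ B₂, {x} ∈ 𝒮₂)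

/-- Sufficiency in Theorem 4.1: an `S`-pair admitting the witness configuration is
order consistent. -/
theorem stmt8 (S : Finset α) (𝒮₁ 𝒮₂ : Set (Finset α)) (hn : 3 ≤ S.card)
    (h : IsSPair S 𝒮₁ 𝒮₂) (hw : SPairWitness S 𝒮₁ 𝒮₂) :
    OrderConsistent S 𝒮₁ 𝒮₂ := by
  obtain ⟨A₁, hA₁, A₂, hA₂, B₁, B₂, hcA₁, hcA₂, hA12, hB₁S, hB₂S, hcB₁, hcB₂,
    hBA₁, hBA₂, hKsub, hcK, hx₁, hx₂⟩ := hw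
  obtain ⟨hS₁sub, hS₂sub, -⟩ := h
  have hA₁S : A₁ ⊆ S := hS₁sub A₁ hA₁
  have hA₂S : A₂ ⊆ S := hS₂sub A₂ hA₂
  -- extract a₁, a₂ with A₁ = S.erase a₁, A₂ = S.erase a₂
  have h1 : (S \ A₁).card = 1 := by
    rw [Finset.card_sdiff_of_subset hA₁S, hcA₁]; omega
  obtain ⟨a₁, ha₁⟩ := Finset.card_eq_one.mp h1
  have h2 : (S \ A₂).card = 1 := by
    rw [Finset.card_sdiff_of_subset hA₂S, hcA₂]; omega
  obtain ⟨a₂, ha₂⟩ := Finset.card_eq_one.mp h2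
  have hA₁e : A₁ = S.erase a₁ := by
    rw [Finset.erase_eq, ← ha₁, Finset.sdiff_sdiff_self_left,
      Finset.inter_eq_right.mpr hA₁S]
  have hA₂e : A₂ = S.erase a₂ := by
    rw [Finset.erase_eq, ← ha₂, Finset.sdiff_sdiff_self_left,
      Finset.inter_eq_right.mpr hA₂S]
  have ha₁m : a₁ ∈ S \ A₁ := ha₁ ▸ Finset.mem_singleton_self a₁
  have ha₂m : a₂ ∈ S \ A₂ := ha₂ ▸ Finset.mem_singleton_self a₂
  have ha₁S : a₁ ∈ S := (Finset.mem_sdiff.mp ha₁m).1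
  have ha₂S : a₂ ∈ S := (Finset.mem_sdiff.mp ha₂m).1
  have ha₁A₁ : a₁ ∉ A₁ := (Finset.mem_sdiff.mp ha₁m).2
  have ha₂A₂ : a₂ ∉ A₂ := (Finset.mem_sdiff.mp ha₂m).2
  have ha12 : a₁ ≠ a₂ := by
    intro hEq; exact hA12 (by rw [hA₁e, hA₂e, hEq])
  -- membership facts
  have ha₁B₁ : a₁ ∈ B₁ := by
    by_contra hcon
    have hsub : B₁ ⊆ A₁ := by
      intro x hx
      rw [hA₁e]
      exact Finset.mem_erase.mpr ⟨fun hxe => hcon (hxe ▸ hx), hB₁S hx⟩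
    have : B₁ ∩ A₁ = B₁ := Finset.inter_eq_left.mpr hsub
    rw [hBA₁] at this
    have := congrArg Finset.card this
    rw [hcK, hcB₁] at this
    omega
  have ha₂B₂ : a₂ ∈ B₂ := by
    by_contra hcon
    have hsub : B₂ ⊆ A₂ := by
      intro x hx
      rw [hA₂e]
      exact Finset.mem_erase.mpr ⟨fun hxe => hcon (hxe ▸ hx), hB₂S hx⟩
    have : B₂ ∩ A₂ = B₂ := Finset.inter_eq_left.mpr hsub
    rw [hBA₂] at this
    have := congrArg Finset.card this
    rw [hcK, hcB₂] at this
    omega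
  have ha₂B₁ : a₂ ∉ B₁ := by
    intro hcon
    have ha₂A₁ : a₂ ∈ A₁ := by
      rw [hA₁e]; exact Finset.mem_erase.mpr ⟨fun hh => ha12 hh.symm, ha₂S⟩
    have : a₂ ∈ B₁ ∩ B₂ := hBA₁ ▸ Finset.mem_inter.mpr ⟨hcon, ha₂A₁⟩
    exact ha₂A₂ (Finset.mem_inter.mp (hKsub this)).2
  have ha₁B₂ : a₁ ∉ B₂ := by
    intro hcon
    have ha₁A₂ : a₁ ∈ A₂ := by
      rw [hA₂e]; exact Finset.mem_erase.mpr ⟨ha12, ha₁S⟩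
    have : a₁ ∈ B₁ ∩ B₂ := hBA₂ ▸ Finset.mem_inter.mpr ⟨hcon, ha₁A₂⟩
    exact ha₁A₁ (Finset.mem_inter.mp (hKsub this)).1
  -- extract c with S \ (B₁ ∪ B₂) = {c}
  have hU : (B₁ ∪ B₂).card = S.card - 1 := by
    have := Finset.card_union_add_card_inter B₁ B₂
    rw [hcB₁, hcB₂, hcK] at this
    omega
  have hUS : B₁ ∪ B₂ ⊆ S := Finset.union_subset hB₁S hB₂S
  have h3 : (S \ (B₁ ∪ B₂)).card = 1 := by
    rw [Finset.card_sdiff_of_subset hUS, hU]; omega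
  obtain ⟨c, hc⟩ := Finset.card_eq_one.mp h3
  have hcm : c ∈ S \ (B₁ ∪ B₂) := hc ▸ Finset.mem_singleton_self c
  have hcS : c ∈ S := (Finset.mem_sdiff.mp hcm).1
  have hcB₁' : c ∉ B₁ := fun hh => (Finset.mem_sdiff.mp hcm).2 (Finset.mem_union_left _ hh)
  have hcB₂' : c ∉ B₂ := fun hh => (Finset.mem_sdiff.mp hcm).2 (Finset.mem_union_right _ hh)
  have hca₁ : a₁ ≠ c := fun hh => hcB₁' (hh ▸ ha₁B₁)
  have hca₂ : a₂ ≠ c := fun hh => hcB₂' (hh ▸ ha₂B₂)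
  -- complements of B₁, B₂ in S
  have hSB₁ : S \ B₁ = {a₂, c} := by
    refine (Finset.eq_of_subset_of_card_le ?_ ?_).symm
    · intro x hx
      rcases Finset.mem_insert.mp hx with rfl | hx
      · exact Finset.mem_sdiff.mpr ⟨ha₂S, ha₂B₁⟩
      · rw [Finset.mem_singleton] at hx
        exact hx ▸ Finset.mem_sdiff.mpr ⟨hcS, hcB₁'⟩
    · rw [Finset.card_sdiff_of_subset hB₁S, hcB₁, Finset.card_insert_of_notMem
        (by simp [hca₂]), Finset.card_singleton]
      omega
  have hSB₂ : S \ B₂ = {a₁, c} := by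
    refine (Finset.eq_of_subset_of_card_le ?_ ?_).symm
    · intro x hx
      rcases Finset.mem_insert.mp hx with rfl | hx
      · exact Finset.mem_sdiff.mpr ⟨ha₁S, ha₁B₂⟩
      · rw [Finset.mem_singleton] at hx
        exact hx ▸ Finset.mem_sdiff.mpr ⟨hcS, hcB₂'⟩
    · rw [Finset.card_sdiff_of_subset hB₂S, hcB₂, Finset.card_insert_of_notMem
        (by simp [hca₁]), Finset.card_singleton]
      omega
  -- the ordering part
  intro e he_inj he_img
  have hnpos : 0 < S.card := by omega
  set i0 : Fin S.card := ⟨0, hnpos⟩ with hi0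
  set il : Fin S.card := ⟨S.card - 1, by omega⟩ with hil
  have he0S : e i0 ∈ S := he_img ▸ Finset.mem_image_of_mem e (Finset.mem_univ i0)
  have helS : e il ∈ S := he_img ▸ Finset.mem_image_of_mem e (Finset.mem_univ il)
  by_cases hc1 : e i0 ∈ B₁
  · refine ⟨i0, Or.inl ?_⟩
    have : Finset.Iic i0 = {i0} := by
      ext j; simp only [Finset.mem_Iic, Finset.mem_singleton, Fin.le_def, Fin.ext_iff, Fin.val_mk, hi0]
      omega
    rw [this, Finset.image_singleton]
    exact hx₁ _ hc1
  by_cases hc2 : e il ∈ B₂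
  · refine ⟨il, Or.inr ?_⟩
    have : Finset.Ici il = {il} := by
      ext j
      simp only [Finset.mem_Ici, Finset.mem_singleton, Fin.le_def, Fin.ext_iff, Fin.val_mk, hil]
      have := j.isLt
      omega
    rw [this, Finset.image_singleton]
    exact hx₂ _ hc2
  by_cases hc3 : e il = a₁
  · refine ⟨⟨S.card - 2, by omega⟩, Or.inl ?_⟩
    have hIic : Finset.Iic (⟨S.card - 2, by omega⟩ : Fin S.card)
        = Finset.univ.erase il := by
      ext j
      simp only [Finset.mem_Iic, Finset.mem_erase, Finset.mem_univ, and_true, ne_eq,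
        Fin.le_def, Fin.ext_iff, Fin.val_mk, hil]
      have := j.isLt
      omega
    rw [hIic, Finset.image_erase he_inj, he_img, hc3, ← hA₁e]
    exact hA₁
  · -- e il = c and e i0 = a₂
    have heil : e il = c := by
      have : e il ∈ S \ B₂ := Finset.mem_sdiff.mpr ⟨helS, hc2⟩
      rw [hSB₂] at this
      rcases Finset.mem_insert.mp this with hh | hh
      · exact absurd hh hc3
      · exact Finset.mem_singleton.mp hh
    have hne : i0 ≠ il := by
      simp only [hi0, hil, ne_eq, Fin.mk.injEq]
      omega
    have hei0 : e i0 = a₂ := by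
      have : e i0 ∈ S \ B₁ := Finset.mem_sdiff.mpr ⟨he0S, hc1⟩
      rw [hSB₁] at this
      rcases Finset.mem_insert.mp this with hh | hh
      · exact hh
      · rw [Finset.mem_singleton] at hh
        exact absurd (he_inj (hh.trans heil.symm)) hne
    refine ⟨⟨1, by omega⟩, Or.inr ?_⟩
    have hIci : Finset.Ici (⟨1, by omega⟩ : Fin S.card)
        = Finset.univ.erase i0 := by
      ext j
      simp only [Finset.mem_Ici, Finset.mem_erase, Finset.mem_univ, and_true, ne_eq,
        Fin.le_def, Fin.ext_iff, Fin.val_mk, hi0]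
      omega
    rw [hIci, Finset.image_erase he_inj, he_img, hei0, ← hA₂e]
    exact hA₂
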